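/- Let d ≥ 1, q ≥ 0 integers, and for t > d/2 define M_q^t(m) = Σ_{β∈ℤ^d, β≠0} |2^q β|^{-2t} when m = 0, and M_q^t(m) = Σ_{β∈ℤ^d} |m + 2^q β|^{-2t} otherwise, for m in the box B_q^d = [-2^{q-1}, 2^{q-1}-1]^d. Then for every δ > 0 there exists a constant C = C(d,δ) ≥ 1 such that for all t ∈ [d/2 + δ, 1/δ] and all q ≥ 0: (i) C^{-1} 2^{-2qt} ≤ M_q^t(0) ≤ C 2^{-2qt}; (ii) for all m ∈ B_q^d with m ≠ 0, C^{-1} |m|^{-2t} ≤ M_q^t(m) ≤ C |m|^{-2t}. -/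

import Mathlib

open scoped BigOperators

/-- Euclidean norm of a lattice point `m ∈ ℤ^d`. -/
noncomputable def enorm {d : ℕ} (m : Fin d → ℤ) : ℝ :=
  Real.sqrt (∑ i, ((m i : ℝ))^2)

/-- `M_q^t(m) = Σ_{β ∈ ℤ^d} |m + 2^q β|^{-2t}`; terms with `m + 2^q β = 0` vanish
since `0^{-2t} = 0` for the real power with `-2t ≠ 0`, which encodes the omission
of the `β`-term producing `0` in the definition from the paper. -/
noncomputable def Mq (d q : ℕ) (t : ℝ) (m : Fin d → ℤ) : ℝ :=
  ∑' β : Fin d → ℤ, _root_.enorm (fun i => m i + 2^q * β i) ^ (-(2*t))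

/-- The box `B_q^d = [-2^{q-1}, 2^{q-1}-1]^d ⊂ ℤ^d`. -/
noncomputable def Bqset (d q : ℕ) : Finset (Fin d → ℤ) :=
  Fintype.piFinset (fun _ => Finset.Icc (-(2:ℤ)^(q-1)) ((2:ℤ)^(q-1) - 1))

lemma enorm_nonneg' {d : ℕ} (m : Fin d → ℤ) : 0 ≤ _root_.enorm m := Real.sqrt_nonneg _

lemma one_le_enorm {d : ℕ} {m : Fin d → ℤ} (hm : m ≠ 0) : 1 ≤ _root_.enorm m := by
  obtain ⟨i, hi⟩ := Function.ne_iff.mp hm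
  have hi' : m i ≠ 0 := by simpa using hi
  have h0 : (1:ℝ) ≤ |(m i:ℝ)| := by
    rw [← Int.cast_abs]; exact_mod_cast Int.one_le_abs hi'
  have h1 : (1:ℝ) ≤ ((m i:ℝ))^2 := by nlinarith [sq_abs ((m i:ℝ))]
  have h2 : ((m i:ℝ))^2 ≤ ∑ j, ((m j:ℝ))^2 :=
    Finset.single_le_sum (f := fun j => ((m j:ℝ))^2) (fun j _ => sq_nonneg _) (Finset.mem_univ i)
  calc (1:ℝ) = Real.sqrt 1 := (Real.sqrt_one).symm
  _ ≤ _ := Real.sqrt_le_sqrt (h1.trans h2)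

lemma zenorm_pos {d : ℕ} {m : Fin d → ℤ} (hm : m ≠ 0) : 0 < _root_.enorm m :=
  lt_of_lt_of_le one_pos (one_le_enorm hm)

lemma coord_le_enorm {d : ℕ} (m : Fin d → ℤ) (i : Fin d) : |(m i:ℝ)| ≤ _root_.enorm m := by
  rw [← Real.sqrt_sq_eq_abs]
  exact Real.sqrt_le_sqrt (Finset.single_le_sum (f := fun j => ((m j:ℝ))^2)
    (fun j _ => sq_nonneg _) (Finset.mem_univ i))

lemma enorm_le_of_coord {d : ℕ} {m : Fin d → ℤ} {M : ℝ} (hM : 0 ≤ M)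
    (h : ∀ i, |(m i:ℝ)| ≤ M) : _root_.enorm m ≤ Real.sqrt d * M := by
  have hsum : ∑ i, ((m i:ℝ))^2 ≤ (d:ℝ) * M^2 := by
    calc ∑ i, ((m i:ℝ))^2 ≤ ∑ _i : Fin d, M^2 := by
          refine Finset.sum_le_sum fun i _ => ?_
          rw [← sq_abs]; exact pow_le_pow_left₀ (abs_nonneg _) (h i) 2
    _ = (d:ℝ) * M^2 := by simp [mul_comm]
  calc _root_.enorm m ≤ Real.sqrt ((d:ℝ) * M^2) := Real.sqrt_le_sqrt hsum
  _ = Real.sqrt d * M := by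
        rw [Real.sqrt_mul (by positivity), Real.sqrt_sq hM]

lemma enorm_smul' {d : ℕ} (c : ℤ) (m : Fin d → ℤ) :
    _root_.enorm (fun i => c * m i) = |(c:ℝ)| * _root_.enorm m := by
  unfold _root_.enorm
  rw [← Real.sqrt_sq_eq_abs, ← Real.sqrt_mul (sq_nonneg _)]
  congr 1
  rw [Finset.mul_sum]
  refine Finset.sum_congr rfl fun i _ => by push_cast; ring

lemma enorm_ge_of_coord {d : ℕ} {a b : Fin d → ℤ} {c : ℝ} (hc : 0 ≤ c)
    (h : ∀ i, c * |(b i:ℝ)| ≤ |(a i:ℝ)|) : c * _root_.enorm b ≤ _root_.enorm a := by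
  have h1 : c^2 * (∑ i, ((b i:ℝ))^2) ≤ ∑ i, ((a i:ℝ))^2 := by
    rw [Finset.mul_sum]
    refine Finset.sum_le_sum fun i _ => ?_
    nlinarith [abs_nonneg ((b i:ℝ)), sq_abs ((a i:ℝ)), sq_abs ((b i:ℝ)),
      mul_self_le_mul_self (mul_nonneg hc (abs_nonneg ((b i:ℝ)))) (h i)]
  unfold _root_.enorm
  calc c * Real.sqrt (∑ i, ((b i:ℝ))^2) = Real.sqrt (c^2 * ∑ i, ((b i:ℝ))^2) := by
        rw [Real.sqrt_mul (sq_nonneg c), Real.sqrt_sq hc]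
  _ ≤ _ := Real.sqrt_le_sqrt h1

lemma enorm_zero' {d : ℕ} : _root_.enorm (0 : Fin d → ℤ) = 0 := by simp [_root_.enorm]

lemma enorm_single {d : ℕ} (i₀ : Fin d) : _root_.enorm (Pi.single i₀ (1:ℤ)) = 1 := by
  have h : ∑ i, (((Pi.single i₀ (1:ℤ) : Fin d → ℤ) i : ℝ))^2 = 1 := by
    rw [Finset.sum_eq_single i₀]
    · simp
    · intro j _ hj; simp [Pi.single_apply, hj]
    · intro hh; exact absurd (Finset.mem_univ i₀) hh
  rw [_root_.enorm, h, Real.sqrt_one]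

lemma summable_g {r : ℝ} (hr : 1 < r) :
    Summable (fun k : ℤ => ((1:ℝ) + |(k:ℝ)|) ^ (-r)) := by
  have hbig : Summable (fun k : ℤ => (if k = 0 then (1:ℝ) else 0) + |(k:ℝ)| ^ (-r)) := by
    refine Summable.add ?_ (Real.summable_abs_int_rpow hr)
    exact summable_of_ne_finset_zero (s := {0}) (by intro k hk; simp at hk; simp [hk])
  refine Summable.of_nonneg_of_le (fun k => Real.rpow_nonneg (by positivity) _) (fun k => ?_) hbig
  rcases eq_or_ne k 0 with rfl | hk
  · simp [Real.zero_rpow (by linarith : -r ≠ 0)]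
  · have h1 : (0:ℝ) < |(k:ℝ)| := by
      simp only [abs_pos, Int.cast_ne_zero]; exact hk
    have h2 := Real.rpow_le_rpow_of_nonpos h1
      (by linarith [abs_nonneg ((k:ℝ))] : |(k:ℝ)| ≤ 1 + |(k:ℝ)|) (by linarith : -r ≤ 0)
    simpa [hk] using h2

lemma summable_pi_prod {g : ℤ → ℝ} (hg : Summable g) (h0 : ∀ k, 0 ≤ g k) :
    ∀ d : ℕ, Summable (fun β : Fin d → ℤ => ∏ i, g (β i)) := by
  intro d
  induction d with
  | zero => exact .of_finite
  | succ n ih =>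
    have h := hg.mul_of_nonneg ih h0 (fun β => Finset.prod_nonneg fun i _ => h0 _)
    rw [← (Fin.consEquiv (fun _ : Fin (n+1) => ℤ)).summable_iff]
    refine h.congr fun p => ?_
    simp only [Function.comp, Fin.consEquiv, Equiv.coe_fn_mk, Fin.prod_univ_succ,
      Fin.cons_zero, Fin.cons_succ]

lemma enorm_rpow_le_prod {d : ℕ} {r s : ℝ} (hr0 : 0 < r) (hd0 : 0 < d) (hs : r * d ≤ s)
    (γ : Fin d → ℤ) :
    _root_.enorm γ ^ (-s) ≤ (2:ℝ) ^ (r * d) * ∏ i, ((1:ℝ) + |(γ i:ℝ)|) ^ (-r) := by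
  have hd0' : (0:ℝ) < d := by exact_mod_cast hd0
  have hs0 : 0 < s := lt_of_lt_of_le (by positivity) hs
  rcases eq_or_ne γ 0 with rfl | hγ
  · rw [enorm_zero', Real.zero_rpow (by linarith : -s ≠ 0)]
    positivity
  · set x := _root_.enorm γ with hxdef
    have hx : 1 ≤ x := one_le_enorm hγ
    have hx0 : (0:ℝ) < x := by linarith
    have step1 : ∀ i, ((2:ℝ)*x) ^ (-r) ≤ ((1:ℝ) + |(γ i:ℝ)|) ^ (-r) := by
      intro i
      refine Real.rpow_le_rpow_of_nonpos (by positivity) ?_ (by linarith)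
      have := coord_le_enorm γ i
      linarith
    have step2 : ∏ _i : Fin d, ((2:ℝ)*x) ^ (-r) = ((2:ℝ)*x) ^ (-(r*d)) := by
      rw [Finset.prod_const, Finset.card_univ, Fintype.card_fin,
        ← Real.rpow_natCast (((2:ℝ)*x) ^ (-r)) d, ← Real.rpow_mul (by positivity)]
      ring_nf
    have step3 : x ^ (-s) ≤ x ^ (-(r*(d:ℝ))) :=
      Real.rpow_le_rpow_of_exponent_le hx (by linarith)
    have step4 : x ^ (-(r*(d:ℝ))) = (2:ℝ) ^ (r * d) * ((2:ℝ)*x) ^ (-(r*(d:ℝ))) := by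
      rw [Real.mul_rpow (by norm_num) (le_of_lt hx0), ← mul_assoc,
        ← Real.rpow_add (by norm_num : (0:ℝ) < 2)]
      simp
    have step5 : ((2:ℝ)*x) ^ (-(r*(d:ℝ))) ≤ ∏ i, ((1:ℝ) + |(γ i:ℝ)|) ^ (-r) := by
      rw [← step2]
      exact Finset.prod_le_prod (fun i _ => by positivity) (fun i _ => step1 i)
    calc x ^ (-s) ≤ x ^ (-(r*(d:ℝ))) := step3
    _ = (2:ℝ) ^ (r * d) * ((2:ℝ)*x) ^ (-(r*(d:ℝ))) := step4
    _ ≤ _ := mul_le_mul_of_nonneg_left step5 (by positivity)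

lemma summable_F {d : ℕ} {r s : ℝ} (hr : 1 < r) (hd0 : 0 < d) (hs : r * d ≤ s) :
    Summable (fun γ : Fin d → ℤ => _root_.enorm γ ^ (-s)) :=
  Summable.of_nonneg_of_le (fun γ => Real.rpow_nonneg (enorm_nonneg' γ) _)
    (enorm_rpow_le_prod (by linarith) hd0 hs)
    (((summable_pi_prod (summable_g hr) (fun k => Real.rpow_nonneg (by positivity) _) d).mul_left _))

set_option maxHeartbeats 1000000 in
theorem stmt0 (d : ℕ) (hd : 1 ≤ d) (δ : ℝ) (hδ : 0 < δ) :
    ∃ C : ℝ, 1 ≤ C ∧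
      ∀ t ∈ Set.Icc ((d:ℝ)/2 + δ) (1/δ), ∀ q : ℕ,
        (C⁻¹ * (2:ℝ) ^ (-(2*(q:ℝ)*t)) ≤ Mq d q t 0 ∧
          Mq d q t 0 ≤ C * (2:ℝ) ^ (-(2*(q:ℝ)*t))) ∧
        ∀ m ∈ Bqset d q, m ≠ 0 →
          C⁻¹ * _root_.enorm m ^ (-(2*t)) ≤ Mq d q t m ∧
            Mq d q t m ≤ C * _root_.enorm m ^ (-(2*t)) := by
  have hd0' : (0:ℝ) < d := by exact_mod_cast hd
  have hd1 : (1:ℝ) ≤ d := by exact_mod_cast hd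
  set r : ℝ := ((d:ℝ) + 2*δ)/d with hrdef
  have hr : 1 < r := by
    rw [hrdef, lt_div_iff₀ hd0']; linarith
  have hrd : r * d = (d:ℝ) + 2*δ := by
    rw [hrdef]; field_simp
  set G : (Fin d → ℤ) → ℝ := fun γ => ∏ i, ((1:ℝ) + |(γ i:ℝ)|) ^ (-r) with hGdef
  have hG0 : ∀ γ, 0 ≤ G γ := fun γ => Finset.prod_nonneg fun i _ => Real.rpow_nonneg (by positivity) _
  have hGsum : Summable G :=
    summable_pi_prod (summable_g hr) (fun k => Real.rpow_nonneg (by positivity) _) d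
  set S : ℝ := ∑' γ, G γ with hSdef
  have hS0 : 0 ≤ S := tsum_nonneg hG0
  have hKd : (1:ℝ) ≤ (d:ℝ)^((1:ℝ)/δ) := Real.one_le_rpow hd1 (by positivity)
  have hKd0 : (0:ℝ) ≤ (d:ℝ)^((1:ℝ)/δ) := by linarith
  have h280 : (0:ℝ) < (2:ℝ)^((8:ℝ)/δ) := Real.rpow_pos_of_pos two_pos _
  have h240 : (0:ℝ) < (2:ℝ)^((4:ℝ)/δ) := Real.rpow_pos_of_pos two_pos _
  have h48 : (2:ℝ)^((4:ℝ)/δ) ≤ (2:ℝ)^((8:ℝ)/δ) :=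
    Real.rpow_le_rpow_of_exponent_le one_le_two ((div_le_div_iff_of_pos_right hδ).mpr (by norm_num))
  set C : ℝ := 1 + (d:ℝ)^((1:ℝ)/δ) * ((2:ℝ)^((8:ℝ)/δ) * (S+1)) with hCdef
  have hC1 : 1 ≤ C := by
    have h0 : 0 ≤ (d:ℝ)^((1:ℝ)/δ) * ((2:ℝ)^((8:ℝ)/δ) * (S+1)) := by positivity
    rw [hCdef]; linarith
  have hCinv : C⁻¹ ≤ 1 := inv_le_one_of_one_le₀ hC1
  have hCinv0 : 0 ≤ C⁻¹ := inv_nonneg.mpr (by linarith)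
  refine ⟨C, hC1, ?_⟩
  rintro t ⟨ht1, ht2⟩ q
  have ht0 : 0 < t := by linarith
  have hts : (d:ℝ) + 2*δ ≤ 2*t := by linarith
  have htδ : 2*t ≤ 2/δ := by
    rw [div_eq_mul_inv, ← one_div]; linarith
  have hdδ : (d:ℝ) + 2*δ ≤ 4/δ := by
    have h1 : (d:ℝ) ≤ 2/δ := by linarith
    have h2 : 2*δ ≤ 2/δ := by linarith
    have : (2:ℝ)/δ + 2/δ = 4/δ := by ring
    linarith
  set F : (Fin d → ℤ) → ℝ := fun γ => _root_.enorm γ ^ (-(2*t)) with hFdef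
  have hF0 : ∀ γ, 0 ≤ F γ := fun γ => Real.rpow_nonneg (enorm_nonneg' γ) _
  have hFsum : Summable F := summable_F hr hd (by rw [hrd]; exact hts)
  set Z : ℝ := ∑' γ, F γ with hZdef
  have hZ0 : 0 ≤ Z := tsum_nonneg hF0
  have hZ1 : 1 ≤ Z := by
    have h := Summable.le_tsum hFsum (Pi.single (⟨0, hd⟩ : Fin d) 1) (fun β' _ => hF0 β')
    have he : F (Pi.single (⟨0, hd⟩ : Fin d) 1) = 1 := by
      rw [hFdef]
      simp only []
      rw [enorm_single, Real.one_rpow]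
    rw [he] at h
    exact h
  have hcomp : ∀ γ, F γ ≤ (2:ℝ)^((4:ℝ)/δ) * G γ := by
    intro γ
    calc F γ ≤ (2:ℝ)^(r*(d:ℝ)) * G γ := enorm_rpow_le_prod (by linarith) hd (by rw [hrd]; exact hts) γ
    _ ≤ (2:ℝ)^((4:ℝ)/δ) * G γ := by
        refine mul_le_mul_of_nonneg_right ?_ (hG0 γ)
        exact Real.rpow_le_rpow_of_exponent_le one_le_two (by rw [hrd]; exact hdδ)
  have hZle : Z ≤ (2:ℝ)^((4:ℝ)/δ) * S := by
    calc Z ≤ ∑' γ, (2:ℝ)^((4:ℝ)/δ) * G γ := Summable.tsum_le_tsum hcomp hFsum (hGsum.mul_left _)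
    _ = (2:ℝ)^((4:ℝ)/δ) * S := by rw [tsum_mul_left]
  have hZC : Z ≤ C := by
    have h1 : (2:ℝ)^((4:ℝ)/δ) * S ≤ (2:ℝ)^((8:ℝ)/δ) * (S+1) :=
      mul_le_mul h48 (by linarith) hS0 (by linarith)
    have h2 : (2:ℝ)^((8:ℝ)/δ) * (S+1) ≤ (d:ℝ)^((1:ℝ)/δ) * ((2:ℝ)^((8:ℝ)/δ) * (S+1)) :=
      le_mul_of_one_le_left (by positivity) hKd
    rw [hCdef]; linarith
  have hsummand : ∀ m : Fin d → ℤ,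
      Summable (fun β : Fin d → ℤ => _root_.enorm (fun i => m i + 2^q * β i) ^ (-(2*t))) := by
    intro m
    have hinj : Function.Injective
        (fun β : Fin d → ℤ => (fun i => m i + 2^q * β i : Fin d → ℤ)) := by
      intro a b hab
      funext i
      have h1 := congrFun hab i
      simp only [] at h1
      have h2 := add_left_cancel h1
      exact mul_left_cancel₀ (pow_ne_zero q (two_ne_zero)) h2
    exact hFsum.comp_injective hinj
  constructor
  · -- part (i)
    have hscale : Mq d q t 0 = ((2:ℝ)^(q:ℕ)) ^ (-(2*t)) * Z := by
      rw [Mq, hZdef, ← tsum_mul_left]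
      refine tsum_congr fun β => ?_
      have h1 : _root_.enorm (fun i => (0 : Fin d → ℤ) i + 2^q * β i) = ((2:ℝ)^(q:ℕ)) * _root_.enorm β := by
        simp only [Pi.zero_apply, zero_add]
        rw [enorm_smul']
        push_cast
        rw [abs_of_pos (by positivity)]
      rw [h1, Real.mul_rpow (by positivity) (enorm_nonneg' β)]
    have hpow : ((2:ℝ)^(q:ℕ)) ^ (-(2*t)) = (2:ℝ) ^ (-(2*(q:ℝ)*t)) := by
      rw [← Real.rpow_natCast 2 q, ← Real.rpow_mul (by norm_num)]
      congr 1
      ring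
    rw [hscale, hpow]
    have hP : (0:ℝ) < (2:ℝ) ^ (-(2*(q:ℝ)*t)) := Real.rpow_pos_of_pos two_pos _
    constructor
    · calc C⁻¹ * (2:ℝ) ^ (-(2*(q:ℝ)*t)) ≤ 1 * (2:ℝ) ^ (-(2*(q:ℝ)*t)) :=
            mul_le_mul_of_nonneg_right hCinv (le_of_lt hP)
      _ = (2:ℝ) ^ (-(2*(q:ℝ)*t)) * 1 := by ring
      _ ≤ (2:ℝ) ^ (-(2*(q:ℝ)*t)) * Z := mul_le_mul_of_nonneg_left hZ1 (le_of_lt hP)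
    · calc (2:ℝ) ^ (-(2*(q:ℝ)*t)) * Z ≤ (2:ℝ) ^ (-(2*(q:ℝ)*t)) * C :=
            mul_le_mul_of_nonneg_left hZC (le_of_lt hP)
      _ = C * (2:ℝ) ^ (-(2*(q:ℝ)*t)) := mul_comm _ _
  · -- part (ii)
    intro m hmB hm0
    have hmem : ∀ i, -(2:ℤ)^(q-1) ≤ m i ∧ m i ≤ 2^(q-1) - 1 := by
      intro i
      have := (Fintype.mem_piFinset.mp hmB) i
      exact Finset.mem_Icc.mp this
    have habs : ∀ i, |m i| ≤ 2^(q-1) := by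
      intro i
      rcases hmem i with ⟨h1, h2⟩
      rw [abs_le]; constructor <;> linarith
    have habs' : ∀ i, |(m i : ℝ)| ≤ (2:ℝ)^(q:ℕ) := by
      intro i
      have h1 : |m i| ≤ (2:ℤ)^q := le_trans (habs i) (pow_le_pow_right₀ one_le_two (Nat.sub_le q 1))
      rw [← Int.cast_abs]
      exact_mod_cast h1
    have hE0 : (0:ℝ) < _root_.enorm m := zenorm_pos hm0
    have hE : (0:ℝ) ≤ _root_.enorm m ^ (-(2*t)) := Real.rpow_nonneg (le_of_lt hE0) _
    constructor
    · -- lower bound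
      have h := Summable.le_tsum (hsummand m) 0 (fun β' _ => Real.rpow_nonneg (enorm_nonneg' _) _)
      have he : (fun i => m i + 2^q * (0 : Fin d → ℤ) i) = m := by
        funext i; simp
      rw [he] at h
      calc C⁻¹ * _root_.enorm m ^ (-(2*t)) ≤ 1 * _root_.enorm m ^ (-(2*t)) :=
            mul_le_mul_of_nonneg_right hCinv hE
      _ = _root_.enorm m ^ (-(2*t)) := one_mul _
      _ ≤ Mq d q t m := h
    · -- upper bound
      have hup : Mq d q t m ≤ _root_.enorm m ^ (-(2*t)) + (2:ℝ)^(2*t) * (((2:ℝ)^(q:ℕ)) ^ (-(2*t)) * Z) := by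
        rcases Nat.eq_zero_or_pos q with rfl | hq1
        · -- q = 0 : Mq = Z
          have heq : Mq d 0 t m = Z := by
            rw [Mq, hZdef, ← (Equiv.addLeft m).tsum_eq F]
            refine tsum_congr fun β => ?_
            have he0 : (fun i => m i + 2^(0:ℕ) * β i) = (Equiv.addLeft m) β := by
              funext i; simp
            rw [hFdef]
            simp only []
            rw [he0]
          rw [heq]
          have h1 : (1:ℝ) ≤ (2:ℝ)^(2*t) := Real.one_le_rpow one_le_two (by linarith)
          have h2 : ((2:ℝ)^((0:ℕ))) ^ (-(2*t)) = 1 := by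
            norm_num
          rw [h2]
          have h3 : Z ≤ (2:ℝ)^(2*t) * Z := by nlinarith [hZ0, h1]
          rw [one_mul]
          linarith
        · -- q ≥ 1
          have hq2 : (2:ℤ)^q = 2 * 2^(q-1) := by
            conv_lhs => rw [← Nat.succ_pred_eq_of_pos hq1]
            rw [pow_succ', Nat.pred_eq_sub_one]
          have hkey : ∀ β : Fin d → ℤ, β ≠ 0 →
              _root_.enorm (fun i => m i + 2^q * β i) ^ (-(2*t)) ≤ (((2:ℝ)^((q-1:ℕ))) ^ (-(2*t))) * F β := by
            intro β hβ
            have hcoord : ∀ i, ((2:ℝ)^((q-1:ℕ))) * |(β i:ℝ)| ≤ |((m i + 2^q * β i : ℤ):ℝ)| := by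
              intro i
              have hZc : (2:ℤ)^(q-1) * |β i| ≤ |m i + 2^q * β i| := by
                rcases eq_or_ne (β i) 0 with h0 | h0
                · simp [h0]
                · have hb1 : 1 ≤ |β i| := Int.one_le_abs h0
                  have hm1 : |m i| ≤ 2^(q-1) := habs i
                  have htri : |(2:ℤ)^q * β i| ≤ |m i| + |m i + 2^q * β i| := by
                    have h := abs_add_le (-(m i)) (m i + 2^q * β i)
                    have he : -(m i) + (m i + 2^q * β i) = 2^q * β i := by ring
                    rw [he, abs_neg] at h
                    exact h
                  have habsmul : |(2:ℤ)^q * β i| = 2^q * |β i| := by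
                    rw [abs_mul, abs_of_nonneg (by positivity : (0:ℤ) ≤ 2^q)]
                  have hq2' : (2:ℤ)^q * |β i| = 2*(2^(q-1) * |β i|) := by rw [hq2]; ring
                  have hpb : (2:ℤ)^(q-1) * 1 ≤ 2^(q-1) * |β i| :=
                    mul_le_mul_of_nonneg_left hb1 (by positivity)
                  linarith [htri, habsmul, hq2', hm1, hpb]
              exact_mod_cast hZc
            have hge := enorm_ge_of_coord (a := fun i => m i + 2^q * β i) (b := β)
              (c := ((2:ℝ)^((q-1:ℕ)))) (by positivity) hcoord
            have hpos : (0:ℝ) < ((2:ℝ)^((q-1:ℕ))) * _root_.enorm β := by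
              have hh := zenorm_pos hβ
              positivity
            calc _root_.enorm (fun i => m i + 2^q * β i) ^ (-(2*t))
                ≤ (((2:ℝ)^((q-1:ℕ))) * _root_.enorm β) ^ (-(2*t)) :=
                  Real.rpow_le_rpow_of_nonpos hpos hge (by linarith)
            _ = (((2:ℝ)^((q-1:ℕ))) ^ (-(2*t))) * F β := by
                  rw [Real.mul_rpow (by positivity) (enorm_nonneg' β), hFdef]
          have hitesum : Summable (fun β : Fin d → ℤ =>
              if β = 0 then (0:ℝ) else _root_.enorm (fun i => m i + 2^q * β i) ^ (-(2*t))) := by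
            refine Summable.of_nonneg_of_le (fun β => ?_) (fun β => ?_) (hsummand m)
            · rcases eq_or_ne β 0 with rfl | h
              · simp
              · simp only [if_neg h]
                exact Real.rpow_nonneg (enorm_nonneg' _) _
            · rcases eq_or_ne β 0 with rfl | h
              · simp only [if_pos rfl]
                exact Real.rpow_nonneg (enorm_nonneg' _) _
              · simp only [if_neg h]
                exact le_rfl
          have htail : (∑' β : Fin d → ℤ, if β = (0:Fin d → ℤ) then (0:ℝ)
                else _root_.enorm (fun i => m i + 2^q * β i) ^ (-(2*t)))
              ≤ ∑' β : Fin d → ℤ, (((2:ℝ)^((q-1:ℕ))) ^ (-(2*t))) * F β := by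
            refine Summable.tsum_le_tsum (fun β => ?_) hitesum (hFsum.mul_left _)
            rcases eq_or_ne β 0 with rfl | hβ
            · simp only [if_pos rfl]
              exact mul_nonneg (Real.rpow_nonneg (by positivity) _) (hF0 _)
            · rw [if_neg hβ]
              exact hkey β hβ
          have hMq : Mq d q t m = (_root_.enorm (fun i => m i + 2^q * (0:Fin d → ℤ) i) ^ (-(2*t)))
              + ∑' β : Fin d → ℤ, if β = (0:Fin d → ℤ) then (0:ℝ)
                else _root_.enorm (fun i => m i + 2^q * β i) ^ (-(2*t)) := by
            rw [Mq]
            exact Summable.tsum_eq_add_tsum_ite (hsummand m) 0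
          have he0 : (fun i => m i + 2^q * (0:Fin d → ℤ) i) = m := by
            funext i; simp
          rw [he0] at hMq
          have hcZ : (∑' β : Fin d → ℤ, (((2:ℝ)^((q-1:ℕ))) ^ (-(2*t))) * F β)
              = (((2:ℝ)^((q-1:ℕ))) ^ (-(2*t))) * Z := by
            rw [hZdef, tsum_mul_left]
          have hc : ((2:ℝ)^((q-1:ℕ))) ^ (-(2*t)) = (2:ℝ)^(2*t) * ((2:ℝ)^(q:ℕ)) ^ (-(2*t)) := by
            rw [← Real.rpow_natCast 2 (q-1), ← Real.rpow_natCast 2 q,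
              ← Real.rpow_mul (by norm_num), ← Real.rpow_mul (by norm_num),
              ← Real.rpow_add (by norm_num : (0:ℝ) < 2)]
            congr 1
            rw [Nat.cast_sub hq1]
            push_cast
            ring
          have hfin2 : (((2:ℝ)^((q-1:ℕ))) ^ (-(2*t))) * Z
              = (2:ℝ)^(2*t) * (((2:ℝ)^(q:ℕ)) ^ (-(2*t)) * Z) := by
            rw [hc]; ring
          have h1 := htail.trans_eq (hcZ.trans hfin2)
          linarith [hMq, h1]
      -- now the constant chase
      have hDen : ((2:ℝ)^(q:ℕ)) ^ (-(2*t)) ≤ (d:ℝ)^((1:ℝ)/δ) * _root_.enorm m ^ (-(2*t)) := by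
        have h1 : _root_.enorm m ≤ Real.sqrt d * (2:ℝ)^(q:ℕ) := enorm_le_of_coord (by positivity) habs'
        have hsd : (0:ℝ) < Real.sqrt d := Real.sqrt_pos.mpr hd0'
        have h2 : (Real.sqrt d * (2:ℝ)^(q:ℕ)) ^ (-(2*t)) ≤ _root_.enorm m ^ (-(2*t)) :=
          Real.rpow_le_rpow_of_nonpos hE0 h1 (by linarith)
        have h3 : (Real.sqrt d * (2:ℝ)^(q:ℕ)) ^ (-(2*t))
            = (Real.sqrt d) ^ (-(2*t)) * ((2:ℝ)^(q:ℕ)) ^ (-(2*t)) :=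
          Real.mul_rpow (le_of_lt hsd) (by positivity)
        have h4 : (Real.sqrt d) ^ (2*t) * (Real.sqrt d) ^ (-(2*t)) = 1 := by
          rw [← Real.rpow_add hsd]
          simp
        have h5 : (Real.sqrt d) ^ (2*t) ≤ (d:ℝ)^((1:ℝ)/δ) := by
          rw [Real.sqrt_eq_rpow, ← Real.rpow_mul (le_of_lt hd0')]
          refine Real.rpow_le_rpow_of_exponent_le hd1 ?_
          have he : (1:ℝ)/2*(2*t) = t := by ring
          rw [he]
          exact ht2
        have h6 : ((2:ℝ)^(q:ℕ)) ^ (-(2*t))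
            = (Real.sqrt d) ^ (2*t) * ((Real.sqrt d * (2:ℝ)^(q:ℕ)) ^ (-(2*t))) := by
          rw [h3, ← mul_assoc, h4, one_mul]
        rw [h6]
        calc (Real.sqrt d) ^ (2*t) * ((Real.sqrt d * (2:ℝ)^(q:ℕ)) ^ (-(2*t)))
            ≤ (Real.sqrt d) ^ (2*t) * _root_.enorm m ^ (-(2*t)) :=
              mul_le_mul_of_nonneg_left h2 (le_of_lt (Real.rpow_pos_of_pos hsd _))
        _ ≤ (d:ℝ)^((1:ℝ)/δ) * _root_.enorm m ^ (-(2*t)) := mul_le_mul_of_nonneg_right h5 hE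
      have h2t : (2:ℝ)^(2*t) ≤ (2:ℝ)^((4:ℝ)/δ) :=
        Real.rpow_le_rpow_of_exponent_le one_le_two
          (by have h24 : (2:ℝ)/δ ≤ 4/δ := (div_le_div_iff_of_pos_right hδ).mpr (by norm_num); linarith)
      have h2t0 : (0:ℝ) ≤ (2:ℝ)^(2*t) := le_of_lt (Real.rpow_pos_of_pos two_pos _)
      have hq0 : (0:ℝ) ≤ ((2:ℝ)^(q:ℕ)) ^ (-(2*t)) := le_of_lt (Real.rpow_pos_of_pos (by positivity) _)
      -- 2^{2t} * ((2^q)^{-2t} * Z) ≤ 2^{4/δ} * ((K * E) * (2^{4/δ} S))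
      have hchain : (2:ℝ)^(2*t) * (((2:ℝ)^(q:ℕ)) ^ (-(2*t)) * Z)
          ≤ (2:ℝ)^((4:ℝ)/δ) * (((d:ℝ)^((1:ℝ)/δ) * _root_.enorm m ^ (-(2*t))) * ((2:ℝ)^((4:ℝ)/δ) * S)) := by
        refine mul_le_mul h2t ?_ (mul_nonneg hq0 hZ0) (by positivity)
        exact mul_le_mul hDen hZle hZ0 (mul_nonneg hKd0 hE)
      have hfin : (2:ℝ)^((4:ℝ)/δ) * (((d:ℝ)^((1:ℝ)/δ) * _root_.enorm m ^ (-(2*t))) * ((2:ℝ)^((4:ℝ)/δ) * S))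
          ≤ (C - 1) * _root_.enorm m ^ (-(2*t)) := by
        have h44 : (2:ℝ)^((4:ℝ)/δ) * (2:ℝ)^((4:ℝ)/δ) = (2:ℝ)^((8:ℝ)/δ) := by
          rw [← Real.rpow_add two_pos]; congr 1; ring
        have hC1' : C - 1 = (d:ℝ)^((1:ℝ)/δ) * ((2:ℝ)^((8:ℝ)/δ) * (S+1)) := by rw [hCdef]; ring
        rw [hC1']
        have key : (2:ℝ)^((4:ℝ)/δ) * ((2:ℝ)^((4:ℝ)/δ) * S) ≤ (2:ℝ)^((8:ℝ)/δ) * (S+1) := by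
          rw [← mul_assoc, h44]
          exact mul_le_mul_of_nonneg_left (by linarith) (le_of_lt h280)
        calc (2:ℝ)^((4:ℝ)/δ) * (((d:ℝ)^((1:ℝ)/δ) * _root_.enorm m ^ (-(2*t))) * ((2:ℝ)^((4:ℝ)/δ) * S))
            = ((2:ℝ)^((4:ℝ)/δ) * ((2:ℝ)^((4:ℝ)/δ) * S)) * ((d:ℝ)^((1:ℝ)/δ) * _root_.enorm m ^ (-(2*t))) := by ring
        _ ≤ ((2:ℝ)^((8:ℝ)/δ) * (S+1)) * ((d:ℝ)^((1:ℝ)/δ) * _root_.enorm m ^ (-(2*t))) := by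
            exact mul_le_mul_of_nonneg_right key (mul_nonneg hKd0 hE)
        _ = (d:ℝ)^((1:ℝ)/δ) * ((2:ℝ)^((8:ℝ)/δ) * (S+1)) * _root_.enorm m ^ (-(2*t)) := by ring
      calc Mq d q t m ≤ _root_.enorm m ^ (-(2*t)) + (2:ℝ)^(2*t) * (((2:ℝ)^(q:ℕ)) ^ (-(2*t)) * Z) := hup
      _ ≤ _root_.enorm m ^ (-(2*t)) + (C - 1) * _root_.enorm m ^ (-(2*t)) :=
            add_le_add_right (hchain.trans hfin) _
      _ = C * _root_.enorm m ^ (-(2*t)) := by ring
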